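/- Let n = 2k, e a divisor of k, and F^i(x) = x^{2^i} h(Tr^n_e(x)) where h : F_{2^e} → F_{2^e}. If e < k, then F^i has no bent components at all: for every nonzero α ∈ F_{2^n}, the function x ↦ Tr^n_1(αF^i(x)) is not bent. -/

import Mathlib

open Finset

def chr (b : ZMod 2) : ℤ := if b = 0 then 1 else -1

variable {K : Type*} [Field K] [Fintype K] [Algebra (ZMod 2) K]

/-- The absolute trace `Tr^n_1 : F_{2^n} → F_2`. -/
noncomputable def tr (x : K) : ZMod 2 := Algebra.trace (ZMod 2) K x

/-- The Walsh transform of a Boolean function `f` on `K = F_{2^n}`. -/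
noncomputable def walshF (f : K → ZMod 2) (l : K) : ℤ :=
  ∑ x, chr (f x + tr (l * x))

/-- `f` is bent on `K = F_{2^{2k}}`: all Walsh values are `±2^k`. -/
def IsBentF (k : ℕ) (f : K → ZMod 2) : Prop :=
  ∀ l : K, walshF f l = 2 ^ k ∨ walshF f l = -(2 ^ k)

/-- The relative trace `Tr^n_e : F_{2^n} → F_{2^e}` for `e ∣ n`, `n = 2k`:
`x ↦ ∑_{j < n/e} x^{2^{ej}}`. -/
noncomputable def relTr (k e : ℕ) (x : K) : K :=
  ∑ j ∈ Finset.range (2 * k / e), x ^ (2 ^ (e * j))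

set_option linter.unusedSectionVars false
set_option maxHeartbeats 1000000

lemma tr_add (x y : K) : tr (x + y) = tr x + tr y := map_add (Algebra.trace (ZMod 2) K) x y

lemma zmod2_eq_zero : ∀ z : ZMod 2, z ≠ 1 → z = 0 := by decide

lemma chr_add_one : ∀ b : ZMod 2, chr (b + 1) = - chr b := by decide

section Aux

variable (k e : ℕ)

lemma charTwo : CharP K 2 :=
  charP_of_injective_algebraMap (algebraMap (ZMod 2) K).injective 2

lemma relTr_add (x y : K) : relTr k e (x + y) = relTr k e x + relTr k e y := by
  haveI : CharP K 2 := charTwo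
  haveI : Fact (Nat.Prime 2) := ⟨Nat.prime_two⟩
  simp only [relTr, ← Finset.sum_add_distrib]
  exact Finset.sum_congr rfl fun j _ => add_pow_char_pow x y 2 (e * j)

lemma relTr_zero : relTr k e (0 : K) = 0 := by
  simp [relTr, zero_pow (pow_ne_zero _ (two_ne_zero))]

lemma relTr_mem (hek : e ∣ k) (hcard : Fintype.card K = 2 ^ (2 * k)) (x : K) :
    (relTr k e x) ^ (2 ^ e) = relTr k e x := by
  haveI : CharP K 2 := charTwo
  haveI : Fact (Nat.Prime 2) := ⟨Nat.prime_two⟩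
  have hem : e * (2 * k / e) = 2 * k := Nat.mul_div_cancel' (hek.mul_left 2)
  have h1 : (relTr k e x) ^ (2 ^ e) =
      ∑ j ∈ Finset.range (2 * k / e), x ^ (2 ^ (e * (j + 1))) := by
    have hit : (relTr k e x) ^ (2 ^ e) = iterateFrobenius K 2 e (relTr k e x) := rfl
    rw [hit, relTr, map_sum]
    refine Finset.sum_congr rfl fun j _ => ?_
    have hit2 : iterateFrobenius K 2 e (x ^ 2 ^ (e * j)) = (x ^ 2 ^ (e * j)) ^ 2 ^ e := rfl
    have hexp : 2 ^ (e * j) * 2 ^ e = 2 ^ (e * (j + 1)) := by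
      rw [← pow_add, Nat.mul_succ]
    rw [hit2, ← pow_mul, hexp]
  rw [h1, relTr]
  have hg : x ^ (2 ^ (e * (2 * k / e))) = x ^ (2 ^ (e * 0)) := by
    rw [hem, Nat.mul_zero, pow_zero, pow_one, ← hcard]
    exact FiniteField.pow_card x
  have h2 := Finset.sum_range_succ (fun j => x ^ (2 ^ (e * j))) (2 * k / e)
  have h3 := Finset.sum_range_succ' (fun j => x ^ (2 ^ (e * j))) (2 * k / e)
  rw [h2] at h3
  rw [hg] at h3
  exact (add_right_cancel h3).symm

end Aux

theorem stmt11 (k e i : ℕ) (he : 0 < e) (hek : e ∣ k) (helt : e < k)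
    (hcard : Fintype.card K = 2 ^ (2 * k))
    (h : K → K)
    (hsub : ∀ a : K, a ^ (2 ^ e) = a → (h a) ^ (2 ^ e) = h a) :
    ∀ α : K, α ≠ 0 →
      ¬ IsBentF k (fun x => tr (α * (x ^ (2 ^ i) * h (relTr k e x)))) := by
  intro α hα hbent
  haveI : CharP K 2 := charTwo
  haveI : Fact (Nat.Prime 2) := ⟨Nat.prime_two⟩
  haveI : Module.Finite (ZMod 2) K := Module.Finite.of_finite
  set f : K → ZMod 2 := fun x => tr (α * (x ^ (2 ^ i) * h (relTr k e x))) with hf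
  -- the subfield F_{2^e} as a `ZMod 2` submodule of `K`
  set E : Submodule (ZMod 2) K :=
    { carrier := {x : K | x ^ (2 ^ e) = x}
      add_mem' := fun {x y} hx hy => by
        simp only [Set.mem_setOf_eq] at *
        rw [add_pow_char_pow x y 2 e, hx, hy]
      zero_mem' := by
        simp only [Set.mem_setOf_eq]
        exact zero_pow (pow_ne_zero _ two_ne_zero)
      smul_mem' := fun c x hx => by
        simp only [Set.mem_setOf_eq] at *
        fin_cases c
        · change ((0 : ZMod 2) • x) ^ 2 ^ e = (0 : ZMod 2) • x
          rw [zero_smul]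
          exact zero_pow (pow_ne_zero e (two_ne_zero (α := ℕ)))
        · change ((1 : ZMod 2) • x) ^ 2 ^ e = (1 : ZMod 2) • x
          rw [one_smul]
          exact hx } with hE
  -- finrank facts
  have frK : Module.finrank (ZMod 2) K = 2 * k := by
    have h1 : Fintype.card K = Fintype.card (ZMod 2) ^ Module.finrank (ZMod 2) K :=
      Module.card_eq_pow_finrank
    rw [ZMod.card, hcard] at h1
    exact (Nat.pow_right_injective le_rfl h1).symm
  haveI : Fintype E := Fintype.ofFinite E
  have cardE : Fintype.card E ≤ 2 ^ e := by
    classical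
    set P : Polynomial K := Polynomial.X ^ (2 ^ e) - Polynomial.X with hP
    have hdeg : P.natDegree = 2 ^ e := by
      rw [hP, Polynomial.natDegree_sub_eq_left_of_natDegree_lt] <;>
        simp [Polynomial.natDegree_X_pow, Nat.one_lt_two_pow_iff, he.ne']
    have hP0 : P ≠ 0 := by
      intro h0
      rw [h0, Polynomial.natDegree_zero] at hdeg
      exact (pow_ne_zero e (two_ne_zero (α := ℕ))) hdeg.symm
    have hinj : Function.Injective
        (fun x : E => (⟨(x : K), by
          rw [Multiset.mem_toFinset, Polynomial.mem_roots hP0]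
          simp only [Polynomial.IsRoot, hP, Polynomial.eval_sub, Polynomial.eval_pow,
            Polynomial.eval_X]
          have hx : (x : K) ^ (2 ^ e) = (x : K) := x.2
          rw [hx, sub_self]⟩ : {y // y ∈ P.roots.toFinset})) := by
      intro x y hxy
      have hxy' : (x : K) = (y : K) := by
        simpa [Subtype.mk.injEq] using hxy
      exact Subtype.ext hxy'
    calc Fintype.card E ≤ Fintype.card {y // y ∈ P.roots.toFinset} :=
          Fintype.card_le_of_injective _ hinj
      _ = P.roots.toFinset.card := Fintype.card_coe _
      _ ≤ Multiset.card P.roots := Multiset.toFinset_card_le _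
      _ ≤ P.natDegree := Polynomial.card_roots' P
      _ = 2 ^ e := hdeg
  have frE : Module.finrank (ZMod 2) E ≤ e := by
    have h1 : Fintype.card E = Fintype.card (ZMod 2) ^ Module.finrank (ZMod 2) E :=
      Module.card_eq_pow_finrank
    rw [ZMod.card] at h1
    have h2 : (2 : ℕ) ^ Module.finrank (ZMod 2) E ≤ 2 ^ e := h1 ▸ cardE
    exact (Nat.pow_le_pow_iff_right one_lt_two).mp h2
  set d := Module.finrank (ZMod 2) E with hd
  set b := Module.finBasis (ZMod 2) E with hb
  -- the linear map whose kernel provides a period of `f`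
  set L : K →ₗ[ZMod 2] (E × (Fin d → ZMod 2)) :=
    (AddMonoidHom.mk' (fun a => ((⟨relTr k e a, relTr_mem k e hek hcard a⟩ : E),
        fun j => tr (α * a ^ (2 ^ i) * (b j : K)))) (by
      intro x y
      refine Prod.ext (Subtype.ext ?_) (funext fun j => ?_)
      · exact relTr_add k e x y
      · show tr (α * (x + y) ^ (2 ^ i) * (b j : K)) = _
        rw [add_pow_char_pow x y 2 i]
        have hr : α * (x ^ (2 ^ i) + y ^ (2 ^ i)) * (b j : K) =
            α * x ^ (2 ^ i) * (b j : K) + α * y ^ (2 ^ i) * (b j : K) := by ring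
        rw [hr, tr_add]
        rfl)).toZModLinearMap 2 with hL
  have hker : ∃ a : K, a ∈ LinearMap.ker L ∧ a ≠ 0 := by
    by_contra hcon
    push_neg at hcon
    have hbot : LinearMap.ker L = ⊥ := (Submodule.eq_bot_iff _).mpr fun a ha => hcon a ha
    have h1 := LinearMap.finrank_range_add_finrank_ker L
    rw [hbot, finrank_bot, add_zero, frK] at h1
    have h2 : Module.finrank (ZMod 2) (LinearMap.range L) ≤
        Module.finrank (ZMod 2) (E × (Fin d → ZMod 2)) := Submodule.finrank_le _
    rw [Module.finrank_prod, Module.finrank_fin_fun] at h2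
    rw [h1] at h2
    omega
  obtain ⟨a, haL, ha0⟩ := hker
  have haL' : L a = 0 := LinearMap.mem_ker.mp haL
  have hpair : ((⟨relTr k e a, relTr_mem k e hek hcard a⟩ : E),
      fun j => tr (α * a ^ (2 ^ i) * (b j : K))) = (0 : E × (Fin d → ZMod 2)) := haL'
  have hrel0 : relTr k e a = 0 := congrArg (fun p : E × (Fin d → ZMod 2) => (p.1 : K)) hpair
  have hbj : ∀ j, tr (α * a ^ (2 ^ i) * (b j : K)) = 0 := fun j =>
    congrArg (fun p : E × (Fin d → ZMod 2) => p.2 j) hpair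
  -- the linear functional `t ↦ tr (α a^{2^i} t)` vanishes on all of `E`
  have htr0 : ∀ t : K, t ^ (2 ^ e) = t → tr (α * a ^ (2 ^ i) * t) = 0 := by
    intro t ht
    set φ : E →ₗ[ZMod 2] ZMod 2 :=
      (Algebra.trace (ZMod 2) K).comp
        ((LinearMap.mulLeft (ZMod 2) (α * a ^ (2 ^ i))).comp E.subtype) with hφ
    have hφ0 : φ = 0 := by
      apply b.ext
      intro j
      simpa [hφ, tr, LinearMap.mulLeft_apply, mul_assoc] using hbj j
    have hφt := DFunLike.congr_fun hφ0 (⟨t, ht⟩ : E)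
    simpa [hφ, tr, LinearMap.mulLeft_apply, mul_assoc] using hφt
  -- `a` is a period of `f`
  have hper : ∀ x : K, f (x + a) = f x := by
    intro x
    have h1 : relTr k e (x + a) = relTr k e x := by
      rw [relTr_add, hrel0, add_zero]
    have h2 : (x + a) ^ (2 ^ i) = x ^ (2 ^ i) + a ^ (2 ^ i) := add_pow_char_pow x a 2 i
    simp only [hf, h1, h2]
    have h3 : α * ((x ^ (2 ^ i) + a ^ (2 ^ i)) * h (relTr k e x)) =
        α * (x ^ (2 ^ i) * h (relTr k e x)) + α * a ^ (2 ^ i) * h (relTr k e x) := by ring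
    rw [h3, tr_add, htr0 _ (hsub _ (relTr_mem k e hek hcard x)), add_zero]
  have hkpos : 0 < k := lt_of_le_of_lt (Nat.zero_le e) helt
  -- the trace is not identically zero
  have htrne : ∃ y : K, tr y = 1 := by
    by_contra hcon
    push_neg at hcon
    have hz : ∀ y : K, tr y = 0 := by
      intro y
      exact zmod2_eq_zero _ (hcon y)
    have hw : walshF f 0 = (2 : ℤ) ^ (2 * k) := by
      rw [walshF]
      have hone : ∀ x : K, chr (f x + tr (0 * x)) = 1 := by
        intro x
        rw [show f x = 0 from hz _, hz (0 * x), add_zero]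
        simp [chr]
      rw [Finset.sum_congr rfl fun x _ => hone x, Finset.sum_const, Finset.card_univ, hcard]
      simp
    rcases hbent 0 with h1 | h1 <;> rw [hw] at h1
    · have h2 : (2 : ℕ) ^ (2 * k) = 2 ^ k := by exact_mod_cast h1
      have := Nat.pow_right_injective le_rfl h2
      omega
    · have h2 : (0 : ℤ) < 2 ^ (2 * k) := by positivity
      have h3 : (0 : ℤ) < 2 ^ k := by positivity
      omega
  obtain ⟨y, hy⟩ := htrne
  set l : K := y * a⁻¹ with hl
  have hla : tr (l * a) = 1 := by
    rw [hl, mul_assoc, inv_mul_cancel₀ ha0, mul_one, hy]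
  -- the Walsh value at `l` is zero
  have hpoint : ∀ x : K, chr (f (x + a) + tr (l * (x + a))) = - chr (f x + tr (l * x)) := by
    intro x
    rw [hper x, mul_add, tr_add, hla, ← add_assoc, chr_add_one]
  have hW : walshF f l = - walshF f l := by
    have h1 : walshF f l = ∑ x, chr (f (x + a) + tr (l * (x + a))) := by
      rw [walshF]
      exact (Fintype.sum_equiv (Equiv.addRight a)
        (fun x => chr (f (x + a) + tr (l * (x + a)))) _ (fun x => rfl)).symm
    conv_lhs => rw [h1]
    rw [Finset.sum_congr rfl fun x _ => hpoint x, Finset.sum_neg_distrib, walshF]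
  have hW0 : walshF f l = 0 := by linarith
  rcases hbent l with h1 | h1 <;> rw [hW0] at h1
  · have : (0 : ℤ) < 2 ^ k := by positivity
    omega
  · have : (0 : ℤ) < 2 ^ k := by positivity
    omega
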